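/- For every integer N ≥ 1 there exists a constant C_N > 0 such that for all δ ∈ (0, 1/2], the Lebesgue measure of the set {(x₁, …, x_N) ∈ [0,1]^N : ∏_{i=1}^N |cos(2πx_i)| ≤ δ} is at most C_N · δ · (1 + log(1/δ))^{N−1}. -/

import Mathlib

open MeasureTheory Set
open scoped Real

noncomputable def q (t : ℝ) : ℝ := 4 * min |t - 1/4| |t - 3/4|

noncomputable def μ : Measure ℝ := volume.restrict (Icc 0 1)

instance : IsProbabilityMeasure μ := by
  constructor; rw [μ, Measure.restrict_apply_univ, Real.volume_Icc]; norm_num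

lemma q_nonneg (t : ℝ) : 0 ≤ q t := by unfold q; positivity

lemma q_cont : Continuous q := by unfold q; fun_prop


lemma jordan {u : ℝ} (h : |u| ≤ π / 2) : 2 / π * |u| ≤ |Real.sin u| := by
  have hpi := Real.pi_pos
  rcases le_or_gt 0 u with hu | hu
  · have hu2 : u ≤ π / 2 := by rwa [abs_of_nonneg hu] at h
    rw [abs_of_nonneg hu, abs_of_nonneg (Real.sin_nonneg_of_nonneg_of_le_pi hu (by linarith))]
    exact Real.mul_le_sin hu hu2
  · have hu' : 0 ≤ -u := by linarith
    have hu2 : -u ≤ π / 2 := by rw [abs_of_nonpos hu.le] at h; linarith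
    have key := Real.mul_le_sin hu' hu2
    rw [Real.sin_neg] at key
    rw [abs_of_nonpos hu.le, abs_of_nonpos (by nlinarith [div_pos (by norm_num : (0:ℝ) < 2) Real.pi_pos] : Real.sin u ≤ 0)]
    linarith

lemma q_le_abs_cos {x : ℝ} (hx : x ∈ Icc (0:ℝ) 1) : q x ≤ |Real.cos (2 * π * x)| := by
  have hpi := Real.pi_pos
  obtain ⟨hx0, hx1⟩ := hx
  rcases le_or_gt x (1/2) with hhalf | hhalf
  · -- use |x - 1/4|
    set u := 2 * π * x - π / 2 with hu
    have habs : |u| = 2 * π * |x - 1/4| := by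
      rw [hu, show 2 * π * x - π / 2 = 2 * π * (x - 1/4) by ring, abs_mul,
        abs_of_pos (by positivity : (0:ℝ) < 2 * π)]
    have hrange : |u| ≤ π / 2 := by
      rw [habs]
      have h4 : |x - 1/4| ≤ 1/4 := by rw [abs_le]; constructor <;> linarith
      nlinarith
    have hcos : |Real.cos (2 * π * x)| = |Real.sin u| := by
      rw [show 2 * π * x = u + π / 2 by rw [hu]; ring, Real.cos_add_pi_div_two, abs_neg]
    rw [hcos]
    calc q x ≤ 4 * |x - 1/4| := by
          unfold q
          have := min_le_left |x - 1/4| |x - 3/4|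
          linarith
      _ = 2 / π * |u| := by rw [habs]; field_simp; ring
      _ ≤ |Real.sin u| := jordan hrange
  · -- use |x - 3/4|
    set u := 2 * π * x - 3 * π / 2 with hu
    have habs : |u| = 2 * π * |x - 3/4| := by
      rw [hu, show 2 * π * x - 3 * π / 2 = 2 * π * (x - 3/4) by ring, abs_mul,
        abs_of_pos (by positivity : (0:ℝ) < 2 * π)]
    have hrange : |u| ≤ π / 2 := by
      rw [habs]
      have h4 : |x - 3/4| ≤ 1/4 := by rw [abs_le]; constructor <;> linarith
      nlinarith
    have hcos : |Real.cos (2 * π * x)| = |Real.sin u| := by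
      rw [show 2 * π * x = (u + π / 2) + π by rw [hu]; ring, Real.cos_add_pi,
        Real.cos_add_pi_div_two, neg_neg]
    rw [hcos]
    calc q x ≤ 4 * |x - 3/4| := by
          unfold q
          have := min_le_right |x - 1/4| |x - 3/4|
          linarith
      _ = 2 / π * |u| := by rw [habs]; field_simp; ring
      _ ≤ |Real.sin u| := jordan hrange

lemma q_preimage_Iic {a : ℝ} (ha : 0 ≤ a) :
    q ⁻¹' Iic a = Icc (1/4 - a/4) (1/4 + a/4) ∪ Icc (3/4 - a/4) (3/4 + a/4) := by
  ext t
  simp only [mem_preimage, mem_Iic, mem_union, mem_Icc, q]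
  rw [show (4 : ℝ) * min |t - 1/4| |t - 3/4| ≤ a ↔ min |t - 1/4| |t - 3/4| ≤ a/4 by
    constructor <;> intro h <;> linarith, min_le_iff, abs_le, abs_le]
  constructor <;> rintro (⟨h1, h2⟩ | ⟨h1, h2⟩) <;> [left; right; left; right] <;>
    constructor <;> linarith

lemma q_le_one {t : ℝ} (ht : t ∈ Icc (0:ℝ) 1) : q t ≤ 1 := by
  obtain ⟨h0, h1⟩ := ht
  unfold q
  rcases le_or_gt t (1/2) with h | h
  · have : |t - 1/4| ≤ 1/4 := by rw [abs_le]; constructor <;> linarith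
    have := min_le_left |t - 1/4| |t - 3/4|
    linarith
  · have : |t - 3/4| ≤ 1/4 := by rw [abs_le]; constructor <;> linarith
    have := min_le_right |t - 1/4| |t - 3/4|
    linarith

lemma q_measurePreserving : MeasurePreserving q μ μ := by
  refine ⟨q_cont.measurable, ?_⟩
  refine Measure.ext_of_Iic _ _ (fun a => ?_)
  rw [Measure.map_apply q_cont.measurable measurableSet_Iic, μ,
    Measure.restrict_apply (q_cont.measurable measurableSet_Iic),
    Measure.restrict_apply measurableSet_Iic]
  rcases lt_or_ge a 0 with ha | ha
  · have h1 : q ⁻¹' Iic a ∩ Icc 0 1 = ∅ := by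
      ext t
      simp only [mem_inter_iff, mem_preimage, mem_Iic, mem_empty_iff_false, iff_false]
      rintro ⟨hq, -⟩
      have : (0:ℝ) ≤ q t := by unfold q; positivity
      linarith
    have h2 : Iic a ∩ Icc (0:ℝ) 1 = ∅ := by
      ext t; simp only [mem_inter_iff, mem_Iic, mem_Icc, mem_empty_iff_false, iff_false]
      rintro ⟨h1', h2', -⟩; linarith
    rw [h1, h2]
  rcases lt_or_ge a 1 with ha1 | ha1
  · rw [q_preimage_Iic ha]
    have hsub : Icc (1/4 - a/4) (1/4 + a/4) ∪ Icc (3/4 - a/4) (3/4 + a/4) ⊆ Icc (0:ℝ) 1 := by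
      rintro t (ht | ht) <;> simp only [mem_Icc] at * <;> constructor <;> linarith
    rw [inter_eq_left.mpr hsub]
    have hIic : Iic a ∩ Icc (0:ℝ) 1 = Icc 0 a := by
      ext t; simp only [mem_inter_iff, mem_Iic, mem_Icc]
      constructor
      · rintro ⟨h1', h2', h3'⟩; exact ⟨h2', h1'⟩
      · rintro ⟨h1', h2'⟩; exact ⟨h2', h1', by linarith⟩
    rw [hIic, measure_union _ measurableSet_Icc, Real.volume_Icc, Real.volume_Icc,
      Real.volume_Icc]
    · rw [← ENNReal.ofReal_add (by linarith) (by linarith)]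
      ring_nf
    · apply Set.disjoint_left.mpr
      intro t ht1 ht2
      simp only [mem_Icc] at ht1 ht2
      linarith [ht1.2, ht2.1]
  · have h1 : q ⁻¹' Iic a ∩ Icc 0 1 = Icc (0:ℝ) 1 := by
      apply inter_eq_right.mpr
      intro t ht
      simp only [mem_preimage, mem_Iic]
      exact le_trans (q_le_one ht) ha1
    have h2 : Iic a ∩ Icc (0:ℝ) 1 = Icc (0:ℝ) 1 := by
      apply inter_eq_right.mpr
      intro t ht
      exact le_trans ht.2 ha1
    rw [h1, h2]

noncomputable def φ (δ : ℝ) (n : ℕ) (t : ℝ) : ℝ :=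
  if t ≤ δ then 1 else (δ / t) * (1 + Real.log (t / δ)) ^ n

lemma phi_nonneg {δ : ℝ} (h0 : 0 < δ) (n : ℕ) (t : ℝ) : 0 ≤ φ δ n t := by
  unfold φ
  split_ifs with h
  · norm_num
  · push_neg at h
    have ht : 0 < t := lt_trans h0 h
    have : (0:ℝ) ≤ Real.log (t / δ) := Real.log_nonneg ((one_le_div h0).mpr h.le)
    positivity

lemma g_contOn {δ : ℝ} (h0 : 0 < δ) (n : ℕ) :
    ContinuousOn (fun t => (δ / t) * (1 + Real.log (t / δ)) ^ n) (Icc δ 1) := by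
  apply ContinuousOn.mul
  · exact continuousOn_const.div continuousOn_id (fun t ht => ne_of_gt (lt_of_lt_of_le h0 ht.1))
  · apply ContinuousOn.pow
    apply ContinuousOn.add continuousOn_const
    apply ContinuousOn.comp Real.continuousOn_log (continuousOn_id.div_const δ)
    intro t ht
    simp only [mem_compl_iff, mem_singleton_iff]
    have := lt_of_lt_of_le h0 ht.1
    positivity

lemma phi_eq_one {δ : ℝ} (n : ℕ) : EqOn (φ δ n) (fun _ => (1:ℝ)) (Icc 0 δ) :=
  fun t ht => if_pos ht.2

lemma phi_eq_g {δ : ℝ} (n : ℕ) :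
    EqOn (φ δ n) (fun t => (δ / t) * (1 + Real.log (t / δ)) ^ n) (Ioc δ 1) :=
  fun t ht => if_neg (not_le.mpr ht.1)

lemma int1 {δ : ℝ} (n : ℕ) : IntegrableOn (φ δ n) (Icc 0 δ) volume := by
  apply (integrableOn_const ?_).congr_fun (fun t ht => (phi_eq_one n ht).symm)
    measurableSet_Icc
  rw [Real.volume_Icc]; exact ENNReal.ofReal_ne_top

lemma int2 {δ : ℝ} (h0 : 0 < δ) (n : ℕ) : IntegrableOn (φ δ n) (Ioc δ 1) volume := by
  apply ((g_contOn h0 n).integrableOn_Icc.mono_set Ioc_subset_Icc_self).congr_fun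
    (fun t ht => (phi_eq_g n ht).symm) measurableSet_Ioc

lemma integrableOn_phi {δ : ℝ} (h0 : 0 < δ) (h1 : δ ≤ 1) (n : ℕ) :
    IntegrableOn (φ δ n) (Icc 0 1) volume := by
  rw [show Icc (0:ℝ) 1 = Icc 0 δ ∪ Ioc δ 1 from (Set.Icc_union_Ioc_eq_Icc h0.le h1).symm]
  exact (int1 n).union (int2 h0 n)

lemma integral_phi {δ : ℝ} (h0 : 0 < δ) (h1 : δ ≤ 1) (n : ℕ) :
    ∫ t in Icc (0:ℝ) 1, φ δ n t ≤ δ * (1 + Real.log (1/δ)) ^ (n+1) := by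
  have hL : 0 ≤ Real.log (1/δ) := Real.log_nonneg ((one_le_div h0).mpr h1)
  set L := Real.log (1/δ) with hLdef
  have hLδ : L = - Real.log δ := by rw [hLdef, one_div, Real.log_inv]
  -- split the integral
  rw [show Icc (0:ℝ) 1 = Icc 0 δ ∪ Ioc δ 1 from (Set.Icc_union_Ioc_eq_Icc h0.le h1).symm]
  have hdisj : Disjoint (Icc (0:ℝ) δ) (Ioc δ 1) := by
    apply Set.disjoint_left.mpr
    intro t ht1 ht2
    exact absurd ht1.2 (not_le.mpr ht2.1)
  rw [setIntegral_union hdisj measurableSet_Ioc (int1 n) (int2 h0 n)]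
  -- first piece
  have hI1 : ∫ t in Icc (0:ℝ) δ, φ δ n t = δ := by
    rw [setIntegral_congr_fun measurableSet_Icc (phi_eq_one n)]
    simp [Real.volume_Icc, h0.le]
  -- second piece via FTC
  set F : ℝ → ℝ := fun t => δ / (n+1) * (1 + Real.log t - Real.log δ) ^ (n+1) with hF
  have hderiv : ∀ t ∈ Icc δ 1, HasDerivAt F ((δ / t) * (1 + Real.log (t / δ)) ^ n) t := by
    intro t ht
    have ht0 : 0 < t := lt_of_lt_of_le h0 ht.1
    have h1' : HasDerivAt (fun s => 1 + Real.log s - Real.log δ) t⁻¹ t :=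
      ((Real.hasDerivAt_log (ne_of_gt ht0)).const_add 1).sub_const _
    have h2' := (h1'.pow (n+1)).const_mul (δ / (n+1))
    refine h2'.congr_deriv ?_
    rw [Real.log_div (ne_of_gt ht0) (ne_of_gt h0)]
    have : ((n:ℝ) + 1) ≠ 0 := by positivity
    push_cast
    field_simp
    ring
  have hI2 : ∫ t in Ioc δ 1, φ δ n t = F 1 - F δ := by
    rw [setIntegral_congr_fun measurableSet_Ioc (phi_eq_g n),
      ← intervalIntegral.integral_of_le h1]
    apply intervalIntegral.integral_eq_sub_of_hasDerivAt
    · intro t ht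
      rw [uIcc_of_le h1] at ht
      exact hderiv t ht
    · apply ContinuousOn.intervalIntegrable
      rw [uIcc_of_le h1]
      exact g_contOn h0 n
  rw [hI1, hI2]
  have hF1 : F 1 = δ / (n+1) * (1 + L) ^ (n+1) := by
    rw [hF]; simp [hLδ, sub_eq_add_neg]
  have hFδ : F δ = δ / (n+1) := by
    rw [hF]; simp
  rw [hF1, hFδ]
  have hP : 1 ≤ (1 + L) ^ (n+1) := one_le_pow₀ (by linarith)
  have hn1 : (1:ℝ) ≤ (n:ℝ) + 1 := by push_cast; linarith [Nat.cast_nonneg (α := ℝ) n]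
  rw [div_mul_eq_mul_div, div_sub_div_same]
  have key : (δ * (1 + L) ^ (n+1) - δ) / ((n:ℝ) + 1) ≤ δ * (1 + L) ^ (n+1) - δ :=
    div_le_self (by nlinarith) hn1
  linarith

lemma phi_measurable (δ : ℝ) (n : ℕ) : Measurable (φ δ n) := by
  unfold φ
  exact Measurable.ite (measurableSet_le measurable_id measurable_const) measurable_const
    ((measurable_const.div measurable_id).mul
      ((measurable_const.add ((Real.measurable_log).comp (measurable_id.div_const δ))).pow_const n))

lemma prodSet_measurable {n : ℕ} (δ : ℝ) :
    MeasurableSet {y : Fin n → ℝ | ∏ i, y i ≤ δ} :=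
  measurableSet_le (Finset.univ.measurable_prod (fun i _ => measurable_pi_apply i))
    measurable_const

lemma prodCube : ∀ (n : ℕ) (δ : ℝ), 0 < δ → δ ≤ 1 →
    Measure.pi (fun _ : Fin (n+1) => μ) {y | ∏ i, y i ≤ δ} ≤
      ENNReal.ofReal (δ * (1 + Real.log (1/δ)) ^ n) := by
  intro n
  induction n with
  | zero =>
    intro δ h0 h1
    have hset : {y : Fin 1 → ℝ | ∏ i, y i ≤ δ} = univ.pi (fun _ : Fin 1 => Iic δ) := by
      ext y
      simp only [mem_setOf_eq, Fin.prod_univ_one, mem_pi, mem_univ, mem_Iic, forall_true_left]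
      exact ⟨fun h i => by rw [Fin.fin_one_eq_zero i]; exact h, fun h => h 0⟩
    rw [hset, Measure.pi_pi]
    simp only [Finset.prod_const, Finset.card_univ, Fintype.card_fin, pow_one]
    rw [μ, Measure.restrict_apply measurableSet_Iic]
    have : Iic δ ∩ Icc (0:ℝ) 1 = Icc 0 δ := by
      ext t; simp only [mem_inter_iff, mem_Iic, mem_Icc]
      exact ⟨fun ⟨a, b, c⟩ => ⟨b, a⟩, fun ⟨a, b⟩ => ⟨b, a, by linarith⟩⟩
    rw [this, Real.volume_Icc]
    simp [le_refl]
  | succ n ih =>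
    intro δ h0 h1
    set ν := Measure.pi (fun _ : Fin (n+1) => μ) with hν
    have hmp := measurePreserving_piFinSuccAbove (fun _ : Fin (n+2) => μ) 0
    set e := MeasurableEquiv.piFinSuccAbove (fun _ : Fin (n+2) => ℝ) 0 with he
    set T : Set (ℝ × (Fin (n+1) → ℝ)) := {p | p.1 * ∏ i, p.2 i ≤ δ} with hT
    have hTmeas : MeasurableSet T :=
      measurableSet_le (measurable_fst.mul
        (Finset.univ.measurable_prod (fun i _ => (measurable_pi_apply i).comp measurable_snd)))
        measurable_const
    have hpre : {y : Fin (n+2) → ℝ | ∏ i, y i ≤ δ} = e ⁻¹' T := by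
      ext y
      simp only [mem_setOf_eq, mem_preimage, hT, he, MeasurableEquiv.piFinSuccAbove_apply]
      rw [Fin.prod_univ_succAbove (fun i => y i) 0]
      rfl
    rw [hpre, hmp.measure_preimage hTmeas.nullMeasurableSet]
    rw [Measure.prod_apply hTmeas]
    have hslice : ∀ t : ℝ, ν (Prod.mk t ⁻¹' T) ≤ ENNReal.ofReal (φ δ n t) := by
      intro t
      rcases le_or_gt t δ with h | h
      · rw [φ, if_pos h]
        calc ν (Prod.mk t ⁻¹' T) ≤ ν univ := measure_mono (subset_univ _)
          _ = 1 := measure_univ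
          _ = ENNReal.ofReal 1 := by simp
      · have ht0 : 0 < t := lt_trans h0 h
        have hsl : Prod.mk t ⁻¹' T = {z : Fin (n+1) → ℝ | ∏ i, z i ≤ δ / t} := by
          ext z
          simp only [mem_preimage, mem_setOf_eq, hT]
          rw [← le_div_iff₀' ht0]
        rw [φ, if_neg (not_le.mpr h), hsl]
        have := ih (δ / t) (div_pos h0 ht0) ((div_le_one ht0).mpr (by linarith))
        rw [one_div_div] at this
        exact this
    calc ∫⁻ t, ν (Prod.mk t ⁻¹' T) ∂μ ≤ ∫⁻ t, ENNReal.ofReal (φ δ n t) ∂μ :=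
          lintegral_mono hslice
      _ = ENNReal.ofReal (∫ t, φ δ n t ∂μ) := by
          rw [← ofReal_integral_eq_lintegral_ofReal]
          · rw [μ]; exact integrableOn_phi h0 h1 n
          · exact Filter.Eventually.of_forall (phi_nonneg h0 n)
      _ ≤ ENNReal.ofReal (δ * (1 + Real.log (1/δ)) ^ (n+1)) := by
          apply ENNReal.ofReal_le_ofReal
          rw [μ]
          exact integral_phi h0 h1 n

lemma pi_restrict_eq (n : ℕ) :
    (volume : Measure (Fin n → ℝ)).restrict (univ.pi fun _ => Icc 0 1) =
      Measure.pi (fun _ : Fin n => μ) := by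
  refine (Measure.pi_eq (μ := fun _ : Fin n => μ) (fun s hs => ?_)).symm
  rw [Measure.restrict_apply (MeasurableSet.univ_pi hs), ← Set.pi_inter_distrib,
    volume_pi_pi]
  simp only [μ, Measure.restrict_apply (hs _)]

/-- For every `N ≥ 1` there is `C_N > 0` such that for all `δ ∈ (0, 1/2]`,
the Lebesgue measure of `{x ∈ [0,1]^N : ∏ |cos(2πxᵢ)| ≤ δ}` is at most
`C_N · δ · (1 + log(1/δ))^(N-1)`. -/
theorem statement6 (N : ℕ) (hN : 1 ≤ N) :
    ∃ C : ℝ, 0 < C ∧ ∀ δ : ℝ, δ ∈ Set.Ioc (0 : ℝ) (1 / 2) →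
      volume {x : Fin N → ℝ |
          (∀ i, x i ∈ Set.Icc (0 : ℝ) 1) ∧ ∏ i, |Real.cos (2 * π * x i)| ≤ δ} ≤
        ENNReal.ofReal (C * δ * (1 + Real.log (1 / δ)) ^ (N - 1)) := by
  obtain ⟨n, rfl⟩ : ∃ n, N = n + 1 := ⟨N - 1, (Nat.succ_pred_eq_of_pos hN).symm⟩
  refine ⟨1, one_pos, fun δ ⟨h0, h2⟩ => ?_⟩
  have h1 : δ ≤ 1 := le_trans h2 (by norm_num)
  set S := {x : Fin (n+1) → ℝ |
    (∀ i, x i ∈ Set.Icc (0 : ℝ) 1) ∧ ∏ i, |Real.cos (2 * π * x i)| ≤ δ} with hS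
  set A := {y : Fin (n+1) → ℝ | ∏ i, y i ≤ δ} with hA
  set Q : (Fin (n+1) → ℝ) → (Fin (n+1) → ℝ) := fun x i => q (x i) with hQ
  have hmpQ : MeasurePreserving Q (Measure.pi fun _ => μ) (Measure.pi fun _ => μ) :=
    measurePreserving_pi _ _ (fun _ => q_measurePreserving)
  have hsub : S ⊆ (univ.pi fun _ => Icc 0 1) ∩ Q ⁻¹' A := by
    rintro x ⟨hx, hprod⟩
    refine ⟨fun i _ => hx i, ?_⟩
    simp only [mem_preimage, hA, mem_setOf_eq, hQ]
    calc ∏ i, q (x i) ≤ ∏ i, |Real.cos (2 * π * x i)| :=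
          Finset.prod_le_prod (fun i _ => q_nonneg _) (fun i _ => q_le_abs_cos (hx i))
      _ ≤ δ := hprod
  calc volume S ≤ volume ((univ.pi fun _ => Icc 0 1) ∩ Q ⁻¹' A) := measure_mono hsub
    _ = (volume.restrict (univ.pi fun _ => Icc 0 1)) (Q ⁻¹' A) := by
        rw [Measure.restrict_apply (hmpQ.measurable (prodSet_measurable δ)), inter_comm]
    _ = (Measure.pi fun _ : Fin (n+1) => μ) (Q ⁻¹' A) := by rw [pi_restrict_eq]
    _ = (Measure.pi fun _ : Fin (n+1) => μ) A :=
        hmpQ.measure_preimage (prodSet_measurable δ).nullMeasurableSet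
    _ ≤ ENNReal.ofReal (δ * (1 + Real.log (1/δ)) ^ n) := prodCube n δ h0 h1
    _ = ENNReal.ofReal (1 * δ * (1 + Real.log (1/δ)) ^ (n + 1 - 1)) := by
        norm_num
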